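/- For discrete random vectors C^t = (C^t_1,…,C^t_H) and C^p, and any family of proposal conditional distributions q_j(c|y) for each coordinate j, the mutual information is lower bounded as I(C^t; C^p) ≥ ∑_j H(C^t_j) − TC(C^t : C^p) + ∑_j E_{p(c^t_j, c^p)}[log q_j(c^t_j | c^p)]. -/
import Mathlib


open Real Finset

noncomputable def ent {α : Type*} [Fintype α] (p : α → ℝ) : ℝ :=
  -∑ a, p a * Real.log (p a)

noncomputable def margFst {α β : Type*} [Fintype β] (p : α × β → ℝ) (a : α) : ℝ :=
  ∑ b, p (a, b)

noncomputable def margSnd {α β : Type*} [Fintype α] (p : α × β → ℝ) (b : β) : ℝ :=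
  ∑ a, p (a, b)

/-- Conditional entropy H(first | second) of a joint pmf. -/
noncomputable def condEnt {α β : Type*} [Fintype α] [Fintype β] (p : α × β → ℝ) : ℝ :=
  -∑ a, ∑ b, p (a, b) * Real.log (p (a, b) / margSnd p b)

/-- Mutual information of a joint pmf. -/
noncomputable def mi {α β : Type*} [Fintype α] [Fintype β] (p : α × β → ℝ) : ℝ :=
  ∑ a, ∑ b, p (a, b) * Real.log (p (a, b) / (margFst p a * margSnd p b))

/-- Pushforward distribution of a random variable `X` under a pmf `μ` on `Ω`. -/
noncomputable def dist {Ω α : Type*} [Fintype Ω] [DecidableEq α]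
    (μ : Ω → ℝ) (X : Ω → α) (a : α) : ℝ :=
  ∑ ω, if X ω = a then μ ω else 0

/-- Joint distribution of random variables `X`, `Y` under a pmf `μ` on `Ω`. -/
noncomputable def joint {Ω α β : Type*} [Fintype Ω] [DecidableEq α] [DecidableEq β]
    (μ : Ω → ℝ) (X : Ω → α) (Y : Ω → β) : α × β → ℝ :=
  fun ab => ∑ ω, if X ω = ab.1 ∧ Y ω = ab.2 then μ ω else 0

/-- Shannon entropy of a random variable. -/
noncomputable def entRV {Ω α : Type*} [Fintype Ω] [Fintype α] [DecidableEq α]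
    (μ : Ω → ℝ) (X : Ω → α) : ℝ := ent (dist μ X)

/-- Conditional Shannon entropy H(X|Y). -/
noncomputable def condEntRV {Ω α β : Type*} [Fintype Ω] [Fintype α] [Fintype β]
    [DecidableEq α] [DecidableEq β] (μ : Ω → ℝ) (X : Ω → α) (Y : Ω → β) : ℝ :=
  condEnt (joint μ X Y)

/-- Mutual information I(X;Y) between two random variables. -/
noncomputable def miRV {Ω α β : Type*} [Fintype Ω] [Fintype α] [Fintype β]
    [DecidableEq α] [DecidableEq β] (μ : Ω → ℝ) (X : Ω → α) (Y : Ω → β) : ℝ :=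
  mi (joint μ X Y)

/-- Total correlation TC(C) = ∑ⱼ H(Cⱼ) − H(C). -/
noncomputable def tc {Ω : Type*} [Fintype Ω] {H : ℕ} {γ : Fin H → Type*}
    [∀ j, Fintype (γ j)] [∀ j, DecidableEq (γ j)]
    (μ : Ω → ℝ) (C : Ω → ∀ j, γ j) : ℝ :=
  (∑ j, entRV μ (fun ω => C ω j)) - entRV μ C

/-- Conditional total correlation TC(C|Y) = ∑ⱼ H(Cⱼ|Y) − H(C|Y). -/
noncomputable def condTC {Ω β : Type*} [Fintype Ω] [Fintype β] [DecidableEq β]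
    {H : ℕ} {γ : Fin H → Type*} [∀ j, Fintype (γ j)] [∀ j, DecidableEq (γ j)]
    (μ : Ω → ℝ) (C : Ω → ∀ j, γ j) (Y : Ω → β) : ℝ :=
  (∑ j, condEntRV μ (fun ω => C ω j) Y) - condEntRV μ C Y

/-- TC(C : Y) = TC(C) − TC(C|Y). -/
noncomputable def tcGiven {Ω β : Type*} [Fintype Ω] [Fintype β] [DecidableEq β]
    {H : ℕ} {γ : Fin H → Type*} [∀ j, Fintype (γ j)] [∀ j, DecidableEq (γ j)]
    (μ : Ω → ℝ) (C : Ω → ∀ j, γ j) (Y : Ω → β) : ℝ :=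
  tc μ C - condTC μ C Y

/-- The coordinates of `C` are mutually independent under `μ`. -/
def IndepCoords {Ω : Type*} [Fintype Ω] {H : ℕ} {γ : Fin H → Type*}
    [∀ j, Fintype (γ j)] [∀ j, DecidableEq (γ j)]
    (μ : Ω → ℝ) (C : Ω → ∀ j, γ j) : Prop :=
  ∀ c : ∀ j, γ j, dist μ C c = ∏ j, dist μ (fun ω => C ω j) (c j)


section Aux

variable {Ω α β : Type*} [Fintype Ω] [Fintype α] [Fintype β]

lemma joint_nonneg [DecidableEq α] [DecidableEq β] (μ : Ω → ℝ) (hμ : ∀ ω, 0 ≤ μ ω)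
    (X : Ω → α) (Y : Ω → β) (ab : α × β) : 0 ≤ joint μ X Y ab := by
  refine Finset.sum_nonneg fun ω _ => ?_
  split <;> simp [hμ ω]

lemma joint_sum [DecidableEq α] [DecidableEq β] (μ : Ω → ℝ) (hsum : ∑ ω, μ ω = 1)
    (X : Ω → α) (Y : Ω → β) : ∑ a, ∑ b, joint μ X Y (a, b) = 1 := by
  unfold joint
  have h1 : ∀ a : α, ∑ b, ∑ ω, (if X ω = a ∧ Y ω = b then μ ω else 0)
      = ∑ ω, ∑ b, (if X ω = a ∧ Y ω = b then μ ω else 0) := fun a => Finset.sum_comm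
  simp only [h1]
  rw [Finset.sum_comm, ← hsum]
  refine Finset.sum_congr rfl fun ω _ => ?_
  simp [ite_and, Finset.sum_ite_eq]

lemma margFst_joint [DecidableEq α] [DecidableEq β] (μ : Ω → ℝ)
    (X : Ω → α) (Y : Ω → β) (a : α) : margFst (joint μ X Y) a = dist μ X a := by
  unfold margFst joint _root_.dist
  rw [Finset.sum_comm]
  refine Finset.sum_congr rfl fun ω _ => ?_
  by_cases h : X ω = a <;> simp [h]

lemma margSnd_joint [DecidableEq α] [DecidableEq β] (μ : Ω → ℝ)
    (X : Ω → α) (Y : Ω → β) (b : β) : margSnd (joint μ X Y) b = dist μ Y b := by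
  unfold margSnd joint _root_.dist
  rw [Finset.sum_comm]
  refine Finset.sum_congr rfl fun ω _ => ?_
  by_cases h : Y ω = b <;> simp [h]

lemma margFst_nonneg (p : α × β → ℝ) (hp : ∀ ab, 0 ≤ p ab) (a : α) :
    0 ≤ margFst p a := Finset.sum_nonneg fun b _ => hp _

lemma margSnd_nonneg (p : α × β → ℝ) (hp : ∀ ab, 0 ≤ p ab) (b : β) :
    0 ≤ margSnd p b := Finset.sum_nonneg fun a _ => hp _

lemma le_margFst (p : α × β → ℝ) (hp : ∀ ab, 0 ≤ p ab) (a : α) (b : β) :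
    p (a, b) ≤ margFst p a :=
  Finset.single_le_sum (fun b _ => hp (a, b)) (Finset.mem_univ b)

lemma le_margSnd (p : α × β → ℝ) (hp : ∀ ab, 0 ≤ p ab) (a : α) (b : β) :
    p (a, b) ≤ margSnd p b :=
  Finset.single_le_sum (fun a _ => hp (a, b)) (Finset.mem_univ a)

/-- mi p = ent (margFst p) - condEnt p for nonneg p. -/
lemma mi_eq (p : α × β → ℝ) (hp : ∀ ab, 0 ≤ p ab) :
    mi p = ent (margFst p) - condEnt p := by
  have key : ∀ a b, p (a, b) * Real.log (p (a, b) / (margFst p a * margSnd p b))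
      = p (a, b) * Real.log (p (a, b) / margSnd p b) - p (a, b) * Real.log (margFst p a) := by
    intro a b
    rcases (hp (a, b)).eq_or_lt with h | h
    · simp [← h]
    · have hA : 0 < margFst p a := lt_of_lt_of_le h (le_margFst p hp a b)
      have hB : 0 < margSnd p b := lt_of_lt_of_le h (le_margSnd p hp a b)
      rw [div_mul_eq_div_div_swap, Real.log_div (by positivity) hA.ne']
      ring
  unfold mi condEnt ent
  simp only [key, Finset.sum_sub_distrib]
  have h2 : ∀ a, ∑ b, p (a, b) * Real.log (margFst p a)
      = margFst p a * Real.log (margFst p a) := by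
    intro a
    rw [← Finset.sum_mul]; rfl
  simp only [h2]
  ring

/-- Gibbs / cross-entropy inequality. -/
lemma gibbs (p : α × β → ℝ) (hp : ∀ ab, 0 ≤ p ab) (hsum : ∑ a, ∑ b, p (a, b) = 1)
    (q : α → β → ℝ) (hq0 : ∀ c y, 0 ≤ q c y) (hq1 : ∀ y, ∑ c, q c y = 1)
    (hqpos : ∀ c y, 0 < p (c, y) → 0 < q c y) :
    ∑ c, ∑ y, p (c, y) * Real.log (q c y) ≤ -condEnt p := by
  have hBsum : ∑ y, margSnd p y = 1 := by
    unfold margSnd; rw [Finset.sum_comm]; exact hsum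
  have key : ∀ c y, p (c, y) * Real.log (q c y)
      ≤ p (c, y) * Real.log (p (c, y) / margSnd p y) + (q c y * margSnd p y - p (c, y)) := by
    intro c y
    rcases (hp (c, y)).eq_or_lt with h | h
    · rw [← h]
      simpa using mul_nonneg (hq0 c y) (margSnd_nonneg p hp y)
    · have hB : 0 < margSnd p y := lt_of_lt_of_le h (le_margSnd p hp c y)
      have hq : 0 < q c y := hqpos c y h
      have hx : 0 < q c y * margSnd p y / p (c, y) := by positivity
      have hlog := Real.log_le_sub_one_of_pos hx
      have hleq : Real.log (q c y * margSnd p y / p (c, y))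
          = Real.log (q c y) - Real.log (p (c, y) / margSnd p y) := by
        rw [Real.log_div (by positivity) h.ne', Real.log_mul hq.ne' hB.ne',
          Real.log_div h.ne' hB.ne']
        ring
      have := mul_le_mul_of_nonneg_left hlog h.le
      rw [hleq] at this
      have hfield : p (c, y) * (q c y * margSnd p y / p (c, y) - 1)
          = q c y * margSnd p y - p (c, y) := by
        field_simp
      rw [hfield] at this
      linarith
  calc ∑ c, ∑ y, p (c, y) * Real.log (q c y)
      ≤ ∑ c, ∑ y, (p (c, y) * Real.log (p (c, y) / margSnd p y)
          + (q c y * margSnd p y - p (c, y))) := by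
        refine Finset.sum_le_sum fun c _ => Finset.sum_le_sum fun y _ => key c y
    _ = -condEnt p + (∑ y, ∑ c, q c y * margSnd p y - ∑ c, ∑ y, p (c, y)) := by
        unfold condEnt
        simp only [Finset.sum_add_distrib, Finset.sum_sub_distrib]
        rw [Finset.sum_comm (f := fun c y => q c y * margSnd p y)]
        ring
    _ = -condEnt p := by
        have : ∀ y, ∑ c, q c y * margSnd p y = margSnd p y := by
          intro y; rw [← Finset.sum_mul, hq1, one_mul]
        simp [this, hBsum, hsum]

end Aux

/-- Main MI lower bound:
I(Cᵗ; Cᵖ) ≥ ∑ⱼ H(Cᵗⱼ) − TC(Cᵗ : Cᵖ) + ∑ⱼ E[log qⱼ(Cᵗⱼ | Cᵖ)],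
for arbitrary proposal conditional pmfs `qⱼ(·|y)` (positive on the support,
so the expectations are real-valued). -/
theorem mi_lower_bound {Ω β : Type*} [Fintype Ω] [Fintype β] [DecidableEq β]
    {H : ℕ} {γ : Fin H → Type*} [∀ j, Fintype (γ j)] [∀ j, DecidableEq (γ j)]
    (μ : Ω → ℝ) (hμ : ∀ ω, 0 ≤ μ ω) (hsum : ∑ ω, μ ω = 1)
    (Ct : Ω → ∀ j, γ j) (Cp : Ω → β)
    (q : ∀ j, γ j → β → ℝ)
    (hq0 : ∀ j c y, 0 ≤ q j c y) (hq1 : ∀ j y, ∑ c, q j c y = 1)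
    (hqpos : ∀ j c y, 0 < joint μ (fun ω => Ct ω j) Cp (c, y) → 0 < q j c y) :
    (∑ j, entRV μ (fun ω => Ct ω j)) - tcGiven μ Ct Cp
      + ∑ j, ∑ c, ∑ y, joint μ (fun ω => Ct ω j) Cp (c, y) * Real.log (q j c y)
      ≤ miRV μ Ct Cp := by
  have hj : ∀ j, ∑ c, ∑ y, joint μ (fun ω => Ct ω j) Cp (c, y) * Real.log (q j c y)
      ≤ -condEntRV μ (fun ω => Ct ω j) Cp := fun j =>
    gibbs _ (joint_nonneg μ hμ _ _) (joint_sum μ hsum _ _) (q j) (hq0 j) (hq1 j) (hqpos j)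
  have hmi : miRV μ Ct Cp = entRV μ Ct - condEntRV μ Ct Cp := by
    have h1 := mi_eq (joint μ Ct Cp) (joint_nonneg μ hμ _ _)
    have h2 : margFst (joint μ Ct Cp) = dist μ Ct := funext (margFst_joint μ Ct Cp)
    rw [miRV, h1, h2]; rfl
  have hsumle : (∑ j, condEntRV μ (fun ω => Ct ω j) Cp)
      + ∑ j, ∑ c, ∑ y, joint μ (fun ω => Ct ω j) Cp (c, y) * Real.log (q j c y) ≤ 0 := by
    rw [← Finset.sum_add_distrib]
    exact Finset.sum_nonpos fun j _ => by linarith [hj j]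
  unfold tcGiven tc condTC
  rw [hmi]
  linarith [hsumle]
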